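/- (Multisection of generalized Lucas numbers.) For all natural numbers m ≥ 1 and j with j ≤ m, the following identity of formal power series over ℝ holds: (1 − L(m)·X + (−b)^m·X²) · ( Σ_{n≥0} L(m·n + j)·Xⁿ ) = L(j) − (−b)^j·L(m−j)·X. -/

import Mathlib

noncomputable def genFib (a b : ℝ) : ℕ → ℝ
  | 0 => 0
  | 1 => 1
  | n + 2 => a * genFib a b (n + 1) + b * genFib a b n

noncomputable def genLuc (a b : ℝ) : ℕ → ℝ
  | 0 => 2
  | 1 => a
  | n + 2 => a * genLuc a b (n + 1) + b * genLuc a b n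

lemma genLuc_rec (a b : ℝ) (n : ℕ) :
    genLuc a b (n + 2) = a * genLuc a b (n + 1) + b * genLuc a b n := rfl

lemma genLuc_key (a b : ℝ) (q : ℕ) : ∀ k : ℕ,
    genLuc a b (q + k + q) + (-b) ^ q * genLuc a b k
      = genLuc a b (q + k) * genLuc a b q := by
  induction q using Nat.twoStepInduction with
  | zero => intro k; simp [genLuc]; ring
  | one =>
      intro k
      have e : 1 + k + 1 = k + 2 := by ring
      have e2 : 1 + k = k + 1 := by ring
      rw [e, e2, genLuc_rec]
      simp [genLuc]; ring
  | more q IH1 IH2 =>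
      intro k
      have h1 := IH1 (k + 2)
      have h2 := IH2 (k + 1)
      have e1 : q + (k + 2) + q = 2 * q + k + 2 := by ring
      have e2 : q + 1 + (k + 1) + (q + 1) = 2 * q + k + 3 := by ring
      have e3 : q + 2 + k + (q + 2) = 2 * q + k + 2 + 2 := by ring
      have e4 : q + (k + 2) = q + k + 2 := by ring
      have e5 : q + 1 + (k + 1) = q + k + 2 := by ring
      have e6 : q + 2 + k = q + k + 2 := by ring
      rw [e1, e4] at h1
      rw [e2, e5] at h2
      rw [e3, e6, genLuc_rec]
      have r4 : genLuc a b (2 * q + k + 3) = a * genLuc a b (2 * q + k + 2) + b * genLuc a b (2 * q + k + 1) := by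
        rw [show 2 * q + k + 3 = (2 * q + k + 1) + 2 by ring, genLuc_rec]
      have rk := genLuc_rec a b k
      have rq := genLuc_rec a b q
      rw [rq]
      linear_combination a * h2 + b * h1 - b * (-b) ^ q * rk

open PowerSeries in
theorem genLuc_multisection (a b : ℝ) (m j : ℕ) (hm : 1 ≤ m) (hj : j ≤ m) :
    (1 - C (genLuc a b m) * X + C ((-b) ^ m) * X ^ 2) *
        PowerSeries.mk (fun n => genLuc a b (m * n + j)) =
      C (genLuc a b j) - C ((-b) ^ j * genLuc a b (m - j)) * X := by
  set f : PowerSeries ℝ := PowerSeries.mk (fun n => genLuc a b (m * n + j)) with hf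
  have expand : (1 - C (genLuc a b m) * X + C ((-b) ^ m) * X ^ 2) * f
      = f - C (genLuc a b m) * (X * f) + C ((-b) ^ m) * (X ^ 2 * f) := by ring
  rw [expand]
  ext n
  match n with
  | 0 =>
    simp [hf, coeff_zero_eq_constantCoeff]
  | 1 =>
    have h := genLuc_key a b j (m - j)
    have e : j + (m - j) = m := by omega
    rw [e] at h
    have hz : (coeff 1) (X ^ 2 * f) = 0 := by
      rw [mul_comm, PowerSeries.coeff_mul_X_pow']; simp
    have hx : (coeff 1) (X * f) = genLuc a b j := by
      simpa [hf] using PowerSeries.coeff_succ_X_mul (R := ℝ) 0 f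
    rw [map_add, map_sub, coeff_C_mul, coeff_C_mul, hx, hz, mul_zero, add_zero,
        map_sub, coeff_C_mul]
    simp [hf, PowerSeries.coeff_X, PowerSeries.coeff_C]
    linarith
  | (n + 2) =>
    have h := genLuc_key a b m (m * n + j)
    have e : m + (m * n + j) + m = m * (n + 2) + j := by ring
    have e2 : m + (m * n + j) = m * (n + 1) + j := by ring
    rw [e, e2] at h
    simp only [map_sub, map_add, coeff_C_mul]
    rw [show (n + 2 : ℕ) = (n + 1) + 1 from rfl, coeff_succ_X_mul,
      show (n + 1 + 1 : ℕ) = n + 2 from rfl]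
    rw [show X ^ 2 * f = f * X ^ 2 from mul_comm _ _,
      show (n + 2 : ℕ) = n + 2 from rfl, PowerSeries.coeff_mul_X_pow]
    simp [hf, coeff_succ_X_mul, PowerSeries.coeff_X]
    linarith
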